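/- Let m ≥ 3 and n ≥ 6. If n ≡ 4 (mod 6), then γ_{r2}(C_m □ C_n) ≤ ⌈m/3⌉·(n+2); otherwise (for all other residues of n modulo 6 with n not ≡ 0 (mod 6)), γ_{r2}(C_m □ C_n) ≤ ⌈m/3⌉·(n+1). -/
import Mathlib


open SimpleGraph Finset

/-- `f` is a `k`-rainbow dominating function of `G`: every vertex with empty label
sees all `k` colors in its open neighborhood. -/
def IsRainbowDominating {V : Type*} (G : SimpleGraph V) (k : ℕ)
    (f : V → Finset (Fin k)) : Prop :=
  ∀ v, f v = ∅ → ∀ c : Fin k, ∃ u, G.Adj v u ∧ c ∈ f u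

/-- The `k`-rainbow domination number: the minimum weight of a `k`-rainbow
dominating function. -/
noncomputable def rainbowDomNum {V : Type*} [Fintype V] (G : SimpleGraph V) (k : ℕ) : ℕ :=
  sInf {w | ∃ f : V → Finset (Fin k), IsRainbowDominating G k f ∧ w = ∑ v, (f v).card}

namespace TwoRainbowAux

def Bc : ℕ → ℕ → Finset (Fin 2)
  | 0, 2 => {0}
  | 1, 1 => {1}
  | 2, 0 => {0}
  | 3, 2 => {1}
  | 4, 1 => {0}
  | 5, 0 => {1}
  | _, _ => ∅

def Sc : ℕ → ℕ → Finset (Fin 2)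
  | 1, 0 => {1}
  | 1, 2 => {0}
  | 2, 0 => {1}
  | 2, 1 => {1}
  | 3, 0 => {0, 1}
  | 4, 0 => {1}
  | 4, 2 => {0, 1}
  | 5, 0 => {1}
  | 5, 1 => {0}
  | _, _ => ∅

def Col (n j ρ : ℕ) : Finset (Fin 2) :=
  if j = n - 1 then Sc (n % 6) ρ else Bc (j % 6) ρ

lemma Col_eq_S {n j : ℕ} (hj : j = n - 1) (ρ : ℕ) : Col n j ρ = Sc (n % 6) ρ := if_pos hj

lemma Col_eq_B {n j : ℕ} (hj : j ≠ n - 1) (ρ : ℕ) : Col n j ρ = Bc (j % 6) ρ := if_neg hj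

lemma pat {n : ℕ} (hn : 6 ≤ n) (h6 : n % 6 ≠ 0) {j : ℕ} (hj : j < n) {ρ : ℕ} (hρ : ρ < 3)
    (h : Col n j ρ = ∅) (c : Fin 2) :
    c ∈ Col n j ((ρ+1)%3) ∪ Col n j ((ρ+2)%3) ∪ Col n ((j+1)%n) ρ ∪ Col n ((j+n-1)%n) ρ := by
  have hr : n % 6 = 1 ∨ n % 6 = 2 ∨ n % 6 = 3 ∨ n % 6 = 4 ∨ n % 6 = 5 := by omega
  have hρ' : ρ = 0 ∨ ρ = 1 ∨ ρ = 2 := by omega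
  rcases (show j = 0 ∨ j = n - 1 ∨ j = n - 2 ∨ (1 ≤ j ∧ j ≤ n - 3) by omega) with hj0 | hj0 | hj0 | hj0
  · -- j = 0
    subst hj0
    have g1 : ∀ r, Col n 0 r = Bc (0 % 6) r := fun r => Col_eq_B (by omega) r
    have g2 : ∀ r, Col n 1 r = Bc (1 % 6) r := fun r => Col_eq_B (by omega) r
    have g3 : ∀ r, Col n (n-1) r = Sc (n % 6) r := fun r => Col_eq_S rfl r
    rw [show (0+1) % n = 1 from Nat.mod_eq_of_lt (by omega),
      show 0 + n - 1 = n - 1 by omega, Nat.mod_eq_of_lt (show n - 1 < n by omega),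
      g1, g1, g2, g3]
    rw [g1] at h
    rcases hρ' with h' | h' | h' <;> subst h' <;> rcases hr with h' | h' | h' | h' | h' <;>
      rw [h'] <;> revert c h <;> decide
  · -- j = n - 1
    subst hj0
    have g1 : ∀ r, Col n (n-1) r = Sc (n % 6) r := fun r => Col_eq_S rfl r
    have g2 : ∀ r, Col n 0 r = Bc (0 % 6) r := fun r => Col_eq_B (by omega) r
    have g3 : ∀ r, Col n (n-2) r = Bc ((n-2) % 6) r := fun r => Col_eq_B (by omega) r
    rw [show (n-1+1) % n = 0 by rw [show n-1+1 = n by omega, Nat.mod_self],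
      show n-1+n-1 = n+(n-2) by omega, Nat.add_mod_left,
      Nat.mod_eq_of_lt (show n - 2 < n by omega), g1, g1, g2, g3]
    rw [g1] at h
    rcases hρ' with h' | h' | h' <;> subst h' <;> rcases hr with h' | h' | h' | h' | h' <;>
      rw [h'] at h ⊢
    all_goals (
      first
      | (rw [show (n-2) % 6 = 5 by omega]; revert c h; decide)
      | (rw [show (n-2) % 6 = 0 by omega]; revert c h; decide)
      | (rw [show (n-2) % 6 = 1 by omega]; revert c h; decide)
      | (rw [show (n-2) % 6 = 2 by omega]; revert c h; decide)
      | (rw [show (n-2) % 6 = 3 by omega]; revert c h; decide))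

  · -- j = n - 2
    subst hj0
    have g1 : ∀ r, Col n (n-2) r = Bc ((n-2) % 6) r := fun r => Col_eq_B (by omega) r
    have g2 : ∀ r, Col n (n-1) r = Sc (n % 6) r := fun r => Col_eq_S rfl r
    have g3 : ∀ r, Col n (n-3) r = Bc ((n-3) % 6) r := fun r => Col_eq_B (by omega) r
    rw [show (n-2+1) % n = n-1 by
        rw [show n-2+1 = n-1 by omega]; exact Nat.mod_eq_of_lt (by omega),
      show n-2+n-1 = n+(n-3) by omega, Nat.add_mod_left,
      Nat.mod_eq_of_lt (show n - 3 < n by omega), g1, g1, g2, g3]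
    rw [g1] at h
    rcases hρ' with h' | h' | h' <;> subst h' <;> rcases hr with h' | h' | h' | h' | h' <;>
      rw [h']
    all_goals (
      first
      | (rw [show (n-2) % 6 = 5 by omega] at h ⊢; rw [show (n-3) % 6 = 4 by omega]; revert c h; decide)
      | (rw [show (n-2) % 6 = 0 by omega] at h ⊢; rw [show (n-3) % 6 = 5 by omega]; revert c h; decide)
      | (rw [show (n-2) % 6 = 1 by omega] at h ⊢; rw [show (n-3) % 6 = 0 by omega]; revert c h; decide)
      | (rw [show (n-2) % 6 = 2 by omega] at h ⊢; rw [show (n-3) % 6 = 1 by omega]; revert c h; decide)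
      | (rw [show (n-2) % 6 = 3 by omega] at h ⊢; rw [show (n-3) % 6 = 2 by omega]; revert c h; decide))
  · -- generic 1 ≤ j ≤ n-3
    have g1 : ∀ r, Col n j r = Bc (j % 6) r := fun r => Col_eq_B (by omega) r
    have g2 : ∀ r, Col n (j+1) r = Bc ((j+1) % 6) r := fun r => Col_eq_B (by omega) r
    have g3 : ∀ r, Col n (j-1) r = Bc ((j-1) % 6) r := fun r => Col_eq_B (by omega) r
    rw [Nat.mod_eq_of_lt (show j + 1 < n by omega),
      show j+n-1 = n+(j-1) by omega, Nat.add_mod_left,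
      Nat.mod_eq_of_lt (show j - 1 < n by omega), g1, g1, g2, g3]
    rw [g1] at h
    rcases hρ' with h' | h' | h' <;> subst h' <;>
      rcases (show j % 6 = 0 ∨ j % 6 = 1 ∨ j % 6 = 2 ∨ j % 6 = 3 ∨ j % 6 = 4 ∨ j % 6 = 5 by omega)
        with ht | ht | ht | ht | ht | ht <;>
      rw [show (j+1) % 6 = (j % 6 + 1) % 6 by omega, show (j-1) % 6 = (j % 6 + 5) % 6 by omega] <;>
      rw [ht] at h ⊢ <;> revert c h <;> decide

def F (m n i j : ℕ) : Finset (Fin 2) :=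
  if m % 3 = 1 ∧ i = m - 1 then
    (if Col n j 0 ∪ Col n j 2 = ∅ then {0} else Col n j 0 ∪ Col n j 2)
  else if m % 3 = 2 ∧ i = m - 1 then Col n j 1 ∪ Col n j 2
  else if m % 3 = 2 ∧ i = m - 2 then Col n j 0
  else Col n j (i % 3)

lemma F_last1 {m n j : ℕ} (h : m % 3 = 1) :
    F m n (m-1) j = if Col n j 0 ∪ Col n j 2 = ∅ then {0} else Col n j 0 ∪ Col n j 2 := by
  unfold F; rw [if_pos ⟨h, rfl⟩]

lemma F_last2 {m n j : ℕ} (h : m % 3 = 2) : F m n (m-1) j = Col n j 1 ∪ Col n j 2 := by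
  unfold F; rw [if_neg (by rintro ⟨h1, _⟩; omega), if_pos ⟨h, rfl⟩]

lemma F_snd2 {m n j : ℕ} (hm : 3 ≤ m) (h : m % 3 = 2) : F m n (m-2) j = Col n j 0 := by
  unfold F
  rw [if_neg (by rintro ⟨h1, _⟩; omega), if_neg (by rintro ⟨_, h2⟩; omega), if_pos ⟨h, rfl⟩]

lemma F_reg {m n i j : ℕ} (h1 : m % 3 = 0 ∨ i ≠ m - 1) (h2 : m % 3 ≠ 2 ∨ i ≠ m - 2) :
    F m n i j = Col n j (i % 3) := by
  unfold F
  rw [if_neg (by rintro ⟨ha, hb⟩; rcases h1 with h | h <;> omega),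
    if_neg (by rintro ⟨ha, hb⟩; rcases h1 with h | h <;> omega),
    if_neg (by rintro ⟨ha, hb⟩; rcases h2 with h | h <;> omega)]

lemma padsub {n j : ℕ} (s : Finset (Fin 2)) (hs : s ⊆ Col n j 0 ∪ Col n j 2) :
    s ⊆ (if Col n j 0 ∪ Col n j 2 = ∅ then {0} else Col n j 0 ∪ Col n j 2) := by
  split_ifs with h
  · rw [h] at hs
    intro x hx
    exact absurd (hs hx) (by simp)
  · exact hs

lemma Fsup {m : ℕ} (hm : 3 ≤ m) (n i j : ℕ) (hi : i < m) : Col n j (i % 3) ⊆ F m n i j := by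
  by_cases hA : i = m - 1
  · subst hA
    rcases (show m % 3 = 0 ∨ m % 3 = 1 ∨ m % 3 = 2 by omega) with h0 | h0 | h0
    · rw [F_reg (Or.inl h0) (by omega)]
    · rw [F_last1 h0, show (m-1) % 3 = 0 by omega]
      exact padsub _ Finset.subset_union_left
    · rw [F_last2 h0, show (m-1) % 3 = 1 by omega]
      exact Finset.subset_union_left
  · by_cases hB : m % 3 = 2 ∧ i = m - 2
    · obtain ⟨h2, hb⟩ := hB
      subst hb
      rw [F_snd2 hm h2, show (m-2) % 3 = 0 by omega]
    · rw [F_reg (Or.inr hA) (by tauto)]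

lemma vertDown {m : ℕ} (hm : 3 ≤ m) (n i j : ℕ) (hi : i < m) :
    Col n j ((i % 3 + 2) % 3) ⊆ F m n ((i + m - 1) % m) j := by
  rcases Nat.eq_zero_or_pos i with h0 | h0
  · subst h0
    rw [show (0 + m - 1) % m = m - 1 by rw [show 0 + m - 1 = m - 1 by omega]; exact Nat.mod_eq_of_lt (by omega)]
    rcases (show m % 3 = 0 ∨ m % 3 = 1 ∨ m % 3 = 2 by omega) with h | h | h
    · rw [F_reg (Or.inl h) (by omega), show (m-1) % 3 = (0 % 3 + 2) % 3 by omega]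
    · rw [F_last1 h, show (0 % 3 + 2) % 3 = 2 by norm_num]
      exact padsub _ Finset.subset_union_right
    · rw [F_last2 h, show (0 % 3 + 2) % 3 = 2 by norm_num]
      exact Finset.subset_union_right
  · rw [show i + m - 1 = m + (i - 1) by omega, Nat.add_mod_left,
      Nat.mod_eq_of_lt (show i - 1 < m by omega)]
    by_cases hB : m % 3 = 2 ∧ i - 1 = m - 2
    · obtain ⟨h2, hb⟩ := hB
      rw [show i - 1 = m - 2 from hb, F_snd2 hm h2, show (i % 3 + 2) % 3 = 0 by omega]
    · rw [F_reg (Or.inr (by omega)) (by tauto), show (i-1) % 3 = (i % 3 + 2) % 3 by omega]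

lemma vertUp {m : ℕ} (hm : 3 ≤ m) (n i j : ℕ) (hi : i < m) (hx : m % 3 = 0 ∨ i ≠ m - 1) :
    Col n j ((i % 3 + 1) % 3) ⊆ F m n ((i + 1) % m) j := by
  rcases (show i = m - 1 ∨ i < m - 1 by omega) with h0 | h0
  · have hm0 : m % 3 = 0 := by rcases hx with h | h; exacts [h, absurd h0 h]
    subst h0
    rw [show (m - 1 + 1) % m = 0 by rw [show m - 1 + 1 = m by omega, Nat.mod_self],
      F_reg (Or.inl hm0) (by omega), show (m-1) % 3 = 2 by omega,
      show 0 % 3 = (2 + 1) % 3 by norm_num]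
  · rw [Nat.mod_eq_of_lt (show i + 1 < m by omega)]
    by_cases hA : i + 1 = m - 1
    · rcases (show m % 3 = 0 ∨ m % 3 = 1 ∨ m % 3 = 2 by omega) with h | h | h
      · rw [hA, F_reg (Or.inl h) (by omega), show (m-1) % 3 = (i % 3 + 1) % 3 by omega]
      · rw [hA, F_last1 h, show (i % 3 + 1) % 3 = 0 by omega]
        exact padsub _ Finset.subset_union_left
      · rw [hA, F_last2 h, show (i % 3 + 1) % 3 = 1 by omega]
        exact Finset.subset_union_left
    · by_cases hB : m % 3 = 2 ∧ i + 1 = m - 2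
      · obtain ⟨h2, hb⟩ := hB
        rw [hb, F_snd2 hm h2, show (i % 3 + 1) % 3 = 0 by omega]
      · rw [F_reg (Or.inr hA) (by tauto), show (i+1) % 3 = (i % 3 + 1) % 3 by omega]

lemma Fne1 {m n j : ℕ} (h : m % 3 = 1) : F m n (m - 1) j ≠ ∅ := by
  rw [F_last1 h]
  split_ifs with h'
  · simp
  · exact h'

lemma Fe2 {m n j : ℕ} (h : m % 3 = 2) (he : F m n (m - 1) j = ∅) :
    Col n j 1 = ∅ ∧ Col n j 2 = ∅ := by
  rw [F_last2 h] at he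
  exact Finset.union_eq_empty.mp he

lemma cyc_adj_succ {k : ℕ} (hk : 3 ≤ k) (a : Fin k) :
    (cycleGraph k).Adj a ⟨(a.val + 1) % k, Nat.mod_lt _ (by omega)⟩ := by
  rw [cycleGraph_adj']
  right
  rw [Fin.sub_def]
  simp only
  rcases (show a.val + 1 < k ∨ a.val + 1 = k by omega) with h | h
  · rw [Nat.mod_eq_of_lt h, show k - a.val + (a.val + 1) = k + 1 by omega,
      Nat.add_mod_left]
    exact Nat.mod_eq_of_lt (by omega)
  · rw [h, Nat.mod_self, show k - a.val + 0 = 1 by omega]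
    exact Nat.mod_eq_of_lt (by omega)

lemma cyc_adj_pred {k : ℕ} (hk : 3 ≤ k) (a : Fin k) :
    (cycleGraph k).Adj a ⟨(a.val + k - 1) % k, Nat.mod_lt _ (by omega)⟩ := by
  rw [cycleGraph_adj']
  left
  rw [Fin.sub_def]
  simp only
  rcases (show a.val = 0 ∨ 1 ≤ a.val by omega) with h | h
  · rw [h, show 0 + k - 1 = k - 1 by omega, Nat.mod_eq_of_lt (show k - 1 < k by omega),
      show k - (k - 1) + 0 = 1 by omega]
    exact Nat.mod_eq_of_lt (by omega)
  · rw [show a.val + k - 1 = k + (a.val - 1) by omega, Nat.add_mod_left,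
      Nat.mod_eq_of_lt (show a.val - 1 < k by omega),
      show k - (a.val - 1) + a.val = k + 1 by omega, Nat.add_mod_left]
    exact Nat.mod_eq_of_lt (by omega)

lemma isDom {m n : ℕ} (hm : 3 ≤ m) (hn : 6 ≤ n) (h6 : n % 6 ≠ 0) :
    IsRainbowDominating (cycleGraph m □ cycleGraph n) 2
      (fun v => F m n v.1.val v.2.val) := by
  rintro ⟨i, j⟩ hv c
  dsimp only at hv
  have hCol : Col n j.val (i.val % 3) = ∅ := by
    have h := Fsup hm n i.val j.val i.isLt
    rw [hv] at h
    exact Finset.subset_empty.mp h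
  have hmem := pat hn h6 j.isLt (Nat.mod_lt _ (by norm_num)) hCol c
  rcases Finset.mem_union.mp hmem with hmem' | hL
  · rcases Finset.mem_union.mp hmem' with hmem'' | hR
    · rcases Finset.mem_union.mp hmem'' with hU | hD
      · -- up
        by_cases hsp : m % 3 = 0 ∨ i.val ≠ m - 1
        · exact ⟨(⟨(i.val + 1) % m, Nat.mod_lt _ (by omega)⟩, j),
            SimpleGraph.boxProd_adj_left.mpr (cyc_adj_succ hm i),
            vertUp hm n i.val j.val i.isLt hsp hU⟩
        · push_neg at hsp
          obtain ⟨hs0, hsl⟩ := hsp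
          rcases (show m % 3 = 1 ∨ m % 3 = 2 by omega) with h1 | h2
          · exact absurd (hsl ▸ hv) (Fne1 h1)
          · have h2' := Fe2 h2 (hsl ▸ hv)
            rw [show (i.val % 3 + 1) % 3 = 2 by omega, h2'.2] at hU
            exact absurd hU (Finset.notMem_empty c)
      · -- down
        exact ⟨(⟨(i.val + m - 1) % m, Nat.mod_lt _ (by omega)⟩, j),
          SimpleGraph.boxProd_adj_left.mpr (cyc_adj_pred hm i),
          vertDown hm n i.val j.val i.isLt hD⟩
    · -- right
      exact ⟨(i, ⟨(j.val + 1) % n, Nat.mod_lt _ (by omega)⟩),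
        SimpleGraph.boxProd_adj_right.mpr (cyc_adj_succ (by omega) j),
        Fsup hm n i.val _ i.isLt hR⟩
  · -- left
    exact ⟨(i, ⟨(j.val + n - 1) % n, Nat.mod_lt _ (by omega)⟩),
      SimpleGraph.boxProd_adj_right.mpr (cyc_adj_pred (by omega) j),
      Fsup hm n i.val _ i.isLt hL⟩

lemma sum_range_eq {M : Type*} [AddCommMonoid M] (f : ℕ → M) {a b : ℕ} (h : a = b) :
    ∑ i ∈ Finset.range a, f i = ∑ i ∈ Finset.range b, f i := by rw [h]

def colw (n j : ℕ) : ℕ := (Col n j 0).card + (Col n j 1).card + (Col n j 2).card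

lemma colw_base {n j : ℕ} (hj : j ≠ n - 1) : colw n j = 1 := by
  unfold colw
  rw [Col_eq_B hj, Col_eq_B hj, Col_eq_B hj]
  rcases (show j % 6 = 0 ∨ j % 6 = 1 ∨ j % 6 = 2 ∨ j % 6 = 3 ∨ j % 6 = 4 ∨ j % 6 = 5 by omega)
    with h | h | h | h | h | h <;> rw [h] <;> decide

lemma colw_S {n : ℕ} (hn : 6 ≤ n) (h6 : n % 6 ≠ 0) :
    colw n (n-1) = if n % 6 = 4 then 3 else 2 := by
  unfold colw
  rw [Col_eq_S rfl, Col_eq_S rfl, Col_eq_S rfl]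
  rcases (show n % 6 = 1 ∨ n % 6 = 2 ∨ n % 6 = 3 ∨ n % 6 = 4 ∨ n % 6 = 5 by omega)
    with h | h | h | h | h <;> rw [h] <;> decide

lemma colw_pos {n j : ℕ} (hn : 6 ≤ n) (h6 : n % 6 ≠ 0) : 1 ≤ colw n j := by
  by_cases hj : j = n - 1
  · rw [hj, colw_S hn h6]; split_ifs <;> omega
  · rw [colw_base hj]

lemma sum_colw {n : ℕ} (hn : 6 ≤ n) (h6 : n % 6 ≠ 0) :
    ∑ j ∈ Finset.range n, colw n j = n + (if n % 6 = 4 then 2 else 1) := by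
  rw [sum_range_eq (fun j => colw n j) (show n = n - 1 + 1 by omega), Finset.sum_range_succ, Finset.sum_congr rfl (fun j hj => colw_base (by
      have := Finset.mem_range.mp hj; omega)), Finset.sum_const, Finset.card_range,
    smul_eq_mul, mul_one, colw_S hn h6]
  split_ifs <;> omega

lemma sum3 (q : ℕ) (w : ℕ → ℕ) :
    ∑ i ∈ Finset.range (3*q), w (i % 3) = q * (w 0 + w 1 + w 2) := by
  induction q with
  | zero => simp
  | succ q ih =>
    rw [show 3*(q+1) = 3*q + 1 + 1 + 1 by ring, Finset.sum_range_succ, Finset.sum_range_succ,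
      Finset.sum_range_succ, ih, show (3*q) % 3 = 0 by omega, show (3*q+1) % 3 = 1 by omega,
      show (3*q+1+1) % 3 = 2 by omega]
    ring

lemma pad_card_le {n j : ℕ} (hn : 6 ≤ n) (h6 : n % 6 ≠ 0) :
    (if Col n j 0 ∪ Col n j 2 = ∅ then ({0} : Finset (Fin 2)) else Col n j 0 ∪ Col n j 2).card
      ≤ colw n j := by
  split_ifs with h
  · rw [Finset.card_singleton]
    exact colw_pos hn h6
  · refine le_trans (Finset.card_union_le _ _) ?_
    unfold colw; omega

lemma sum_F_le {m n : ℕ} (hm : 3 ≤ m) (hn : 6 ≤ n) (h6 : n % 6 ≠ 0) (j : ℕ) :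
    ∑ i ∈ Finset.range m, (F m n i j).card ≤ (m + 2) / 3 * colw n j := by
  rcases (show m % 3 = 0 ∨ m % 3 = 1 ∨ m % 3 = 2 by omega) with hs | hs | hs
  · rw [Finset.sum_congr rfl (fun i _ => by rw [F_reg (Or.inl hs) (by omega)])]
    rw [sum_range_eq (fun i => (Col n j (i % 3)).card) (show m = 3 * (m / 3) by omega)]
    have e3 : ∑ i ∈ Finset.range (3 * (m/3)), (Col n j (i % 3)).card = m/3 * colw n j := by
      unfold colw; exact sum3 (m/3) (fun ρ => (Col n j ρ).card)
    rw [e3, show (m+2)/3 = m/3 by omega]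
  · rw [sum_range_eq (fun i => (F m n i j).card) (show m = (m-1) + 1 by omega),
      Finset.sum_range_succ, Finset.sum_congr rfl (fun i hi => by
      rw [F_reg (Or.inr (by have := Finset.mem_range.mp hi; omega)) (by omega)])]
    rw [sum_range_eq (fun i => (Col n j (i % 3)).card) (show m - 1 = 3 * (m / 3) by omega)]
    have e3 : ∑ i ∈ Finset.range (3 * (m/3)), (Col n j (i % 3)).card = m/3 * colw n j := by
      unfold colw; exact sum3 (m/3) (fun ρ => (Col n j ρ).card)
    rw [e3, F_last1 hs, show (m+2)/3 = m/3 + 1 by omega, add_mul, one_mul]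
    exact Nat.add_le_add_left (pad_card_le hn h6) _
  · rw [sum_range_eq (fun i => (F m n i j).card) (show m = (m-2) + 1 + 1 by omega),
      Finset.sum_range_succ, Finset.sum_range_succ,
      show m-2+1 = m-1 by omega, Finset.sum_congr rfl (fun i hi => by
        rw [F_reg (Or.inr (by have := Finset.mem_range.mp hi; omega))
          (Or.inr (by have := Finset.mem_range.mp hi; omega))])]
    rw [sum_range_eq (fun i => (Col n j (i % 3)).card) (show m - 2 = 3 * (m / 3) by omega)]
    have e3 : ∑ i ∈ Finset.range (3 * (m/3)), (Col n j (i % 3)).card = m/3 * colw n j := by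
      unfold colw; exact sum3 (m/3) (fun ρ => (Col n j ρ).card)
    rw [e3, F_snd2 hm hs, F_last2 hs, show (m+2)/3 = m/3 + 1 by omega, add_mul, one_mul,
      add_assoc]
    refine Nat.add_le_add_left ?_ _
    refine le_trans (Nat.add_le_add_left (Finset.card_union_le _ _) _) ?_
    unfold colw; omega

lemma total_le {m n : ℕ} (hm : 3 ≤ m) (hn : 6 ≤ n) (h6 : n % 6 ≠ 0) :
    ∑ v : Fin m × Fin n, (F m n v.1.val v.2.val).card
      ≤ (m + 2) / 3 * (n + if n % 6 = 4 then 2 else 1) := by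
  rw [Fintype.sum_prod_type_right]
  have e : ∀ j : Fin n, ∑ i : Fin m, (F m n i.val j.val).card
      = ∑ i ∈ Finset.range m, (F m n i j.val).card := fun j =>
    Fin.sum_univ_eq_sum_range (fun i => (F m n i j.val).card) m
  calc ∑ j : Fin n, ∑ i : Fin m, (F m n i.val j.val).card
      ≤ ∑ j : Fin n, (m + 2) / 3 * colw n j.val := by
        refine Finset.sum_le_sum fun j _ => ?_
        rw [e j]; exact sum_F_le hm hn h6 j.val
    _ = (m + 2) / 3 * ∑ j ∈ Finset.range n, colw n j := by
        rw [← Finset.mul_sum, Fin.sum_univ_eq_sum_range (fun j => colw n j) n]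
    _ = (m + 2) / 3 * (n + if n % 6 = 4 then 2 else 1) := by rw [sum_colw hn h6]

lemma master {m n : ℕ} (hm : 3 ≤ m) (hn : 6 ≤ n) (h6 : n % 6 ≠ 0) :
    rainbowDomNum (cycleGraph m □ cycleGraph n) 2
      ≤ (m + 2) / 3 * (n + if n % 6 = 4 then 2 else 1) :=
  le_trans (Nat.sInf_le ⟨fun v => F m n v.1.val v.2.val, isDom hm hn h6, rfl⟩)
    (total_le hm hn h6)

end TwoRainbowAux

theorem two_rainbow_dom_cycles_upper_general (m n : ℕ) (hm : 3 ≤ m) (hn : 6 ≤ n) :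
    (n % 6 = 4 →
      (rainbowDomNum (cycleGraph m □ cycleGraph n) 2 : ℤ) ≤ ⌈(m : ℚ) / 3⌉ * (n + 2)) ∧
    (n % 6 ≠ 4 → n % 6 ≠ 0 →
      (rainbowDomNum (cycleGraph m □ cycleGraph n) 2 : ℤ) ≤ ⌈(m : ℚ) / 3⌉ * (n + 1)) := by
  have h1 : m ≤ 3 * ((m+2)/3) := by omega
  have h2 : 3 * ((m+2)/3) ≤ m + 2 := by omega
  have hA : (m:ℚ) ≤ 3 * (((m+2)/3 : ℕ) : ℚ) := by exact_mod_cast h1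
  have hB : 3 * (((m+2)/3 : ℕ) : ℚ) ≤ (m:ℚ) + 2 := by exact_mod_cast h2
  have hK : ⌈(m : ℚ) / 3⌉ = (((m+2)/3 : ℕ) : ℤ) := by
    rw [Int.ceil_eq_iff]
    constructor
    · rw [Int.cast_natCast]
      linarith
    · rw [Int.cast_natCast]
      linarith
  constructor
  · intro h4
    have hmas := TwoRainbowAux.master hm hn (show n % 6 ≠ 0 by omega)
    rw [if_pos h4] at hmas
    rw [hK]
    exact_mod_cast hmas
  · intro h4 h0
    have hmas := TwoRainbowAux.master hm hn h0
    rw [if_neg h4] at hmas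
    rw [hK]
    exact_mod_cast hmas
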